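/- For every a ≥ 0 there exists a unique quadruple (A1, A2, A3, b) ∈ ℝ³ × (a, ∞) satisfying the four equations: (i) A1 e^{γ1 b} + A2 e^{γ2 b} + A3 e^{−γ3 b} = r b; (ii) (A1 η/(γ1−η)) e^{γ1 b} + (A2 η/(γ2−η)) e^{γ2 b} − (A3 η/(γ3+η)) e^{−γ3 b} + r(b + 1/η) = 0; (iii) γ1 A1 e^{γ1 a} + γ2 A2 e^{γ2 a} − γ3 A3 e^{−γ3 a} = 1; (iv) γ1 A1 e^{γ1 b} + γ2 A2 e^{γ2 b} − γ3 A3 e^{−γ3 b} = r. Moreover this solution satisfies b > max{a, b*} where b* = (−γ1γ2γ3 + η(−γ1γ2 + γ2γ3 + γ1γ3))/(η γ1 γ2 γ3), and A1 > 0, A2 > 0. -/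

import Mathlib

open Real Filter Topology

lemma hasDerivAt_aff_exp (c t k a b : ℝ) :
    HasDerivAt (fun x : ℝ => c * (x - t) * Real.exp (k * (x - a)))
      (c * Real.exp (k * (b - a)) + c * (b - t) * (Real.exp (k * (b - a)) * k)) b := by
  have h1 : HasDerivAt (fun x : ℝ => c * (x - t)) c b := by
    simpa using ((hasDerivAt_id b).sub_const t).const_mul c
  have h3 : HasDerivAt (fun x : ℝ => k * (x - a)) k b := by
    simpa using ((hasDerivAt_id b).sub_const a).const_mul k
  have h2 : HasDerivAt (fun x : ℝ => Real.exp (k * (x - a))) (Real.exp (k * (b - a)) * k) b :=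
    h3.exp
  exact h1.mul h2

lemma tendsto_aff_exp_zero (c t k a : ℝ) (hk : 0 < k) :
    Tendsto (fun b : ℝ => c * (b - t) * Real.exp (-k * (b - a))) atTop (𝓝 0) := by
  have hy : Tendsto (fun b : ℝ => k * (b - a)) atTop atTop := by
    apply Tendsto.const_mul_atTop hk
    simpa [sub_eq_add_neg] using tendsto_atTop_add_const_right atTop (-a) tendsto_id
  have A : Tendsto (fun b : ℝ => (k * (b - a)) * Real.exp (-(k * (b - a)))) atTop (𝓝 0) := by
    have := tendsto_pow_mul_exp_neg_atTop_nhds_zero 1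
    simpa [Function.comp_def] using this.comp hy
  have B : Tendsto (fun b : ℝ => Real.exp (-(k * (b - a)))) atTop (𝓝 0) :=
    Real.tendsto_exp_atBot.comp (tendsto_neg_atTop_atBot.comp hy)
  have C := (A.const_mul (c / k)).add (B.const_mul (c * (a - t)))
  simp only [mul_zero, add_zero] at C
  apply C.congr
  intro b
  have h : -k * (b - a) = -(k * (b - a)) := by ring
  rw [h]
  field_simp
  ring


set_option maxHeartbeats 2000000 in

/-- For every `a ≥ 0` there is a unique quadruple `(A1, A2, A3, b)` with `b > a`
solving (i)-(iv); moreover `b > max {a, b*}`, `A1 > 0` and `A2 > 0`. -/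
theorem stmt_6 (η γ1 γ2 γ3 r : ℝ)
    (h1 : 0 < γ1) (h2 : γ1 < η) (h3 : η < γ2) (h4 : 0 < γ3) (hr : 1 < r)
    (bstar : ℝ)
    (hbstar : bstar = (-(γ1 * γ2 * γ3) + η * (-(γ1 * γ2) + γ2 * γ3 + γ1 * γ3))
      / (η * γ1 * γ2 * γ3)) :
    ∀ a : ℝ, 0 ≤ a →
      ∃ A1 A2 A3 b : ℝ,
        (a < b ∧
          A1 * Real.exp (γ1 * b) + A2 * Real.exp (γ2 * b) + A3 * Real.exp (-γ3 * b) = r * b ∧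
          A1 * η / (γ1 - η) * Real.exp (γ1 * b) + A2 * η / (γ2 - η) * Real.exp (γ2 * b)
            - A3 * η / (γ3 + η) * Real.exp (-γ3 * b) + r * (b + 1 / η) = 0 ∧
          γ1 * A1 * Real.exp (γ1 * a) + γ2 * A2 * Real.exp (γ2 * a)
            - γ3 * A3 * Real.exp (-γ3 * a) = 1 ∧
          γ1 * A1 * Real.exp (γ1 * b) + γ2 * A2 * Real.exp (γ2 * b)
            - γ3 * A3 * Real.exp (-γ3 * b) = r) ∧
        (∀ A1' A2' A3' b' : ℝ,
          (a < b' ∧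
            A1' * Real.exp (γ1 * b') + A2' * Real.exp (γ2 * b') + A3' * Real.exp (-γ3 * b')
              = r * b' ∧
            A1' * η / (γ1 - η) * Real.exp (γ1 * b') + A2' * η / (γ2 - η) * Real.exp (γ2 * b')
              - A3' * η / (γ3 + η) * Real.exp (-γ3 * b') + r * (b' + 1 / η) = 0 ∧
            γ1 * A1' * Real.exp (γ1 * a) + γ2 * A2' * Real.exp (γ2 * a)
              - γ3 * A3' * Real.exp (-γ3 * a) = 1 ∧
            γ1 * A1' * Real.exp (γ1 * b') + γ2 * A2' * Real.exp (γ2 * b')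
              - γ3 * A3' * Real.exp (-γ3 * b') = r) →
          A1' = A1 ∧ A2' = A2 ∧ A3' = A3 ∧ b' = b) ∧
        max a bstar < b ∧ 0 < A1 ∧ 0 < A2 := by
  intro a ha
  -- basic sign facts
  have hη : 0 < η := h1.trans h2
  have hγ2 : (0:ℝ) < γ2 := by linarith
  have hg12 : γ1 - γ2 < 0 := by linarith
  have hg21 : (0:ℝ) < γ2 - γ1 := by linarith
  have hg13 : (0:ℝ) < γ1 + γ3 := by linarith
  have hg23 : (0:ℝ) < γ2 + γ3 := by linarith
  have hg1η : γ1 - η < 0 := by linarith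
  have hg2η : (0:ℝ) < γ2 - η := by linarith
  have hg3η : (0:ℝ) < γ3 + η := by linarith
  have hηne : η ≠ 0 := ne_of_gt hη
  have hg1 : γ1 ≠ 0 := ne_of_gt h1
  have hg2 : γ2 ≠ 0 := ne_of_gt hγ2
  have hg3 : γ3 ≠ 0 := ne_of_gt h4
  have hg12ne : γ1 - γ2 ≠ 0 := ne_of_lt hg12
  have hg1ηne : γ1 - η ≠ 0 := ne_of_lt hg1η
  have hg2ηne : γ2 - η ≠ 0 := ne_of_gt hg2η
  have hg3ηne : γ3 + η ≠ 0 := ne_of_gt hg3η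
  have hg13ne : γ1 + γ3 ≠ 0 := ne_of_gt hg13
  have hg23ne : γ2 + γ3 ≠ 0 := ne_of_gt hg23
  have hr0 : (0:ℝ) < r := by linarith
  -- constants
  obtain ⟨P1, hP1d⟩ : ∃ x : ℝ, x = r / η * (γ1 - η) * γ2 * γ3 / ((γ1 - γ2) * (γ1 + γ3)) := ⟨_, rfl⟩
  obtain ⟨P2, hP2d⟩ : ∃ x : ℝ, x = r / η * (γ2 - η) * γ1 * γ3 / ((γ2 - γ1) * (γ2 + γ3)) := ⟨_, rfl⟩
  obtain ⟨P3, hP3d⟩ : ∃ x : ℝ, x = r / η * (γ3 + η) * γ1 * γ2 / ((γ1 + γ3) * (γ2 + γ3)) := ⟨_, rfl⟩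
  obtain ⟨t1, ht1d⟩ : ∃ x : ℝ, x = 1/γ2 - 1/γ3 - 1/η := ⟨_, rfl⟩
  obtain ⟨t2, ht2d⟩ : ∃ x : ℝ, x = 1/γ1 - 1/γ3 - 1/η := ⟨_, rfl⟩
  obtain ⟨t3, ht3d⟩ : ∃ x : ℝ, x = 1/γ1 + 1/γ2 - 1/η := ⟨_, rfl⟩
  have hbs : bstar = 1/γ1 + 1/γ2 - 1/γ3 - 1/η := by
    rw [hbstar]; field_simp; ring
  have hP1 : 0 < P1 := by
    rw [hP1d, div_pos_iff]
    right
    refine ⟨?_, ?_⟩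
    · have h5 : 0 < r / η * γ2 * γ3 := by positivity
      nlinarith [mul_neg_of_neg_of_pos hg1η h5]
    · exact mul_neg_of_neg_of_pos hg12 hg13
  have hP2 : 0 < P2 := by
    rw [hP2d]
    have h5 : 0 < r / η := by positivity
    positivity
  have hP3 : 0 < P3 := by
    rw [hP3d]
    have h5 : 0 < r / η := by positivity
    positivity
  -- the function Φ and Q
  obtain ⟨Φ, hΦd⟩ : ∃ f : ℝ → ℝ, f = fun b => γ1 * P1 * (b - t1) * Real.exp (-γ1 * (b - a))
      + γ2 * P2 * (b - t2) * Real.exp (-γ2 * (b - a))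
      - γ3 * P3 * (b - t3) * Real.exp (γ3 * (b - a)) - 1 := ⟨_, rfl⟩
  have hΦval : ∀ b, Φ b = γ1 * P1 * (b - t1) * Real.exp (-γ1 * (b - a))
      + γ2 * P2 * (b - t2) * Real.exp (-γ2 * (b - a))
      - γ3 * P3 * (b - t3) * Real.exp (γ3 * (b - a)) - 1 := fun b => by rw [hΦd]
  obtain ⟨Q, hQval⟩ : ∃ f : ℝ → ℝ, ∀ b, f b = γ1^2 * P1 * Real.exp (-γ1 * (b - a))
      + γ2^2 * P2 * Real.exp (-γ2 * (b - a)) + γ3^2 * P3 * Real.exp (γ3 * (b - a)) :=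
    ⟨_, fun b => rfl⟩
  have hQpos : ∀ b, 0 < Q b := by
    intro b
    rw [hQval]
    have e1 := Real.exp_pos (-γ1 * (b - a))
    have e2 := Real.exp_pos (-γ2 * (b - a))
    have e3 := Real.exp_pos (γ3 * (b - a))
    have m1 : 0 < γ1^2 * P1 * Real.exp (-γ1 * (b - a)) :=
      mul_pos (mul_pos (by positivity) hP1) e1
    have m2 : 0 < γ2^2 * P2 * Real.exp (-γ2 * (b - a)) :=
      mul_pos (mul_pos (by positivity) hP2) e2
    have m3 : 0 < γ3^2 * P3 * Real.exp (γ3 * (b - a)) :=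
      mul_pos (mul_pos (by positivity) hP3) e3
    linarith
  have hcont : Continuous Φ := by rw [hΦd]; fun_prop
  -- derivative
  have hderiv : ∀ b, HasDerivAt Φ (-(b - bstar) * Q b) b := by
    intro b
    have hd := (((hasDerivAt_aff_exp (γ1 * P1) t1 (-γ1) a b).add
        (hasDerivAt_aff_exp (γ2 * P2) t2 (-γ2) a b)).sub
        (hasDerivAt_aff_exp (γ3 * P3) t3 γ3 a b)).sub_const 1
    rw [hΦd]
    refine hd.congr_deriv ?_
    rw [hQval, hbs, ht1d, ht2d, ht3d]
    field_simp
    ring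
  have hΦa : Φ a = r - 1 := by
    rw [hΦval]
    simp only [sub_self, mul_zero, Real.exp_zero, mul_one]
    rw [hP1d, hP2d, hP3d, ht1d, ht2d, ht3d]
    field_simp
    ring
  obtain ⟨M, hMd⟩ : ∃ x : ℝ, x = max a bstar := ⟨_, rfl⟩
  have hbsM : bstar ≤ M := hMd ▸ le_max_right a bstar
  have haM : a ≤ M := hMd ▸ le_max_left a bstar
  -- Φ strictly decreasing on [M, ∞)
  have hanti : StrictAntiOn Φ (Set.Ici M) := by
    apply strictAntiOn_of_deriv_neg (convex_Ici M) hcont.continuousOn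
    intro x hx
    rw [interior_Ici] at hx
    rw [(hderiv x).deriv]
    have hx2 : bstar < x := lt_of_le_of_lt hbsM hx
    have := hQpos x
    nlinarith
  -- Φ positive on (a, M]
  have hpos : ∀ z, a < z → z ≤ M → 0 < Φ z := by
    intro z hz hzM
    have habs : a < bstar := by
      rcases le_or_gt bstar a with hc | hc
      · exfalso; rw [hMd, max_eq_left hc] at hzM; linarith
      · exact hc
    have hMbs : M = bstar := by rw [hMd, max_eq_right habs.le]
    have hmono : StrictMonoOn Φ (Set.Icc a bstar) := by
      apply strictMonoOn_of_deriv_pos (convex_Icc a bstar) hcont.continuousOn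
      intro x hx
      rw [interior_Icc] at hx
      rw [(hderiv x).deriv]
      have := hQpos x
      nlinarith [hx.2]
    have hlt : Φ a < Φ z := by
      apply hmono (Set.mem_Icc.2 ⟨le_refl a, habs.le⟩)
        (Set.mem_Icc.2 ⟨hz.le, by linarith [hMbs ▸ hzM]⟩) hz
    rw [hΦa] at hlt; linarith
  have hΦM : 0 < Φ M := by
    rcases eq_or_lt_of_le haM with hc | hc
    · rw [← hc, hΦa]; linarith
    · exact hpos M hc le_rfl
  -- Φ tends to -∞
  have htends : Tendsto Φ atTop atBot := by
    have h12 : Tendsto (fun b : ℝ => γ1 * P1 * (b - t1) * Real.exp (-γ1 * (b - a))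
        + γ2 * P2 * (b - t2) * Real.exp (-γ2 * (b - a))) atTop (𝓝 0) := by
      have := (tendsto_aff_exp_zero (γ1 * P1) t1 γ1 a h1).add
        (tendsto_aff_exp_zero (γ2 * P2) t2 γ2 a hγ2)
      simpa using this
    have h3t : Tendsto (fun b : ℝ => γ3 * P3 * (b - t3) * Real.exp (γ3 * (b - a))) atTop atTop := by
      apply tendsto_atTop_mono' _ _ (tendsto_atTop_add_const_right atTop (-(γ3 * P3 * t3))
          ((tendsto_id (α := ℝ)).atTop_mul_const (by positivity : (0:ℝ) < γ3 * P3)))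
      filter_upwards [eventually_ge_atTop (max a t3)] with b hb
      have hba : a ≤ b := le_trans (le_max_left _ _) hb
      have hbt3 : t3 ≤ b := le_trans (le_max_right _ _) hb
      have hexp : (1:ℝ) ≤ Real.exp (γ3 * (b - a)) := by
        rw [← Real.exp_zero]
        apply Real.exp_le_exp.2
        nlinarith
      have hc : 0 ≤ γ3 * P3 * (b - t3) := mul_nonneg (le_of_lt (mul_pos h4 hP3)) (by linarith)
      calc id b * (γ3 * P3) + -(γ3 * P3 * t3) = γ3 * P3 * (b - t3) * 1 := by simp only [id]; ring
        _ ≤ γ3 * P3 * (b - t3) * Real.exp (γ3 * (b - a)) :=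
            mul_le_mul_of_nonneg_left hexp hc
    have hsum := h12.add_atBot ((tendsto_neg_atTop_atBot.comp h3t).atBot_add
      (tendsto_const_nhds (x := (-1 : ℝ))))
    rw [hΦd]
    apply hsum.congr
    intro b
    simp only [Function.comp, Pi.add_apply]
    ring
  -- find B with Φ B < 0
  obtain ⟨B, hMB, hΦB⟩ : ∃ B, M < B ∧ Φ B < 0 := by
    have e1 := htends.eventually (eventually_lt_atBot (0:ℝ))
    have e2 := eventually_gt_atTop M
    exact ((e2.and e1).exists).imp (fun B h => ⟨h.1, h.2⟩)
  -- root b₀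
  obtain ⟨b₀, hb₀mem, hb₀⟩ : ∃ b₀ ∈ Set.Ioo M B, Φ b₀ = 0 := by
    have h0 : (0:ℝ) ∈ Set.Ioo (Φ B) (Φ M) := ⟨hΦB, hΦM⟩
    have him := intermediate_value_Ioo' hMB.le hcont.continuousOn h0
    obtain ⟨b₀, hmem, heq⟩ := him
    exact ⟨b₀, hmem, heq⟩
  have hMb₀ : M < b₀ := hb₀mem.1
  have hab₀ : a < b₀ := lt_of_le_of_lt haM hMb₀
  have hbsb₀ : bstar < b₀ := lt_of_le_of_lt hbsM hMb₀
  -- uniqueness of zeros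
  have huniq : ∀ z, a < z → Φ z = 0 → z = b₀ := by
    intro z hz hΦz
    have hzM : M < z := by
      by_contra hcon
      push_neg at hcon
      have := hpos z hz hcon
      linarith
    exact hanti.injOn (Set.mem_Ici.2 hzM.le) (Set.mem_Ici.2 hMb₀.le) (hΦz.trans hb₀.symm)
  -- positivity of b₀ - t1, b₀ - t2
  have ht1b : 0 < b₀ - t1 := by
    have k1 : 0 < (1:ℝ)/γ1 := by positivity
    have k2 : 0 < (1:ℝ)/γ2 := by positivity
    rw [ht1d]; rw [hbs] at hbsb₀; linarith
  have ht2b : 0 < b₀ - t2 := by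
    have k2 : 0 < (1:ℝ)/γ2 := by positivity
    rw [ht2d]; rw [hbs] at hbsb₀; linarith
  -- the linear-system identities
  have s1 : ∀ b : ℝ, P1*(b-t1) + P2*(b-t2) + P3*(b-t3) = r*b := by
    intro b; rw [hP1d, hP2d, hP3d, ht1d, ht2d, ht3d]; field_simp; ring
  have s4 : ∀ b : ℝ, γ1*(P1*(b-t1)) + γ2*(P2*(b-t2)) - γ3*(P3*(b-t3)) = r := by
    intro b; rw [hP1d, hP2d, hP3d, ht1d, ht2d, ht3d]; field_simp; ring
  have s2 : ∀ b : ℝ, P1*(b-t1)*η/(γ1-η) + P2*(b-t2)*η/(γ2-η) - P3*(b-t3)*η/(γ3+η)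
      + r*(b+1/η) = 0 := by
    intro b; rw [hP1d, hP2d, hP3d, ht1d, ht2d, ht3d]; field_simp; ring
  have hE1 : P1*(b₀-t1)*Real.exp (-(γ1*b₀)) * Real.exp (γ1*b₀) = P1*(b₀-t1) := by
    rw [mul_assoc, ← Real.exp_add, neg_add_cancel, Real.exp_zero, mul_one]
  have hE2 : P2*(b₀-t2)*Real.exp (-(γ2*b₀)) * Real.exp (γ2*b₀) = P2*(b₀-t2) := by
    rw [mul_assoc, ← Real.exp_add, neg_add_cancel, Real.exp_zero, mul_one]
  have hE3 : P3*(b₀-t3)*Real.exp (γ3*b₀) * Real.exp (-γ3*b₀) = P3*(b₀-t3) := by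
    rw [mul_assoc, ← Real.exp_add, show γ3*b₀ + -γ3*b₀ = 0 by ring, Real.exp_zero, mul_one]
  refine ⟨P1 * (b₀ - t1) * Real.exp (-(γ1 * b₀)), P2 * (b₀ - t2) * Real.exp (-(γ2 * b₀)),
    P3 * (b₀ - t3) * Real.exp (γ3 * b₀), b₀, ⟨hab₀, ?_, ?_, ?_, ?_⟩, ?_, ?_, ?_, ?_⟩
  · -- (i)
    rw [hE1, hE2, hE3]; exact s1 b₀
  · -- (ii)
    linear_combination (η/(γ1-η))*hE1 + (η/(γ2-η))*hE2 - (η/(γ3+η))*hE3 + s2 b₀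
  · -- (iii)
    have m1 : Real.exp (-(γ1*b₀)) * Real.exp (γ1*a) = Real.exp (-γ1*(b₀-a)) := by
      rw [← Real.exp_add]; congr 1; ring
    have m2 : Real.exp (-(γ2*b₀)) * Real.exp (γ2*a) = Real.exp (-γ2*(b₀-a)) := by
      rw [← Real.exp_add]; congr 1; ring
    have m3 : Real.exp (γ3*b₀) * Real.exp (-γ3*a) = Real.exp (γ3*(b₀-a)) := by
      rw [← Real.exp_add]; congr 1; ring
    have hΦ0 : γ1 * P1 * (b₀ - t1) * Real.exp (-γ1 * (b₀ - a))
        + γ2 * P2 * (b₀ - t2) * Real.exp (-γ2 * (b₀ - a))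
        - γ3 * P3 * (b₀ - t3) * Real.exp (γ3 * (b₀ - a)) - 1 = 0 := by
      rw [← hΦval b₀]; exact hb₀
    linear_combination hΦ0 + (γ1*(P1*(b₀-t1)))*m1 + (γ2*(P2*(b₀-t2)))*m2 - (γ3*(P3*(b₀-t3)))*m3
  · -- (iv)
    linear_combination γ1*hE1 + γ2*hE2 - γ3*hE3 + s4 b₀
  · -- uniqueness
    rintro A1' A2' A3' b' ⟨hb'a, i', ii', iii', iv'⟩
    have hYD : (γ2+γ3)*(A2'*Real.exp (γ2*b') - P2*(b'-t2))
        = -((γ1+γ3)*(A1'*Real.exp (γ1*b') - P1*(b'-t1))) := by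
      linear_combination iv' - s4 b' + γ3*i' - γ3*(s1 b')
    have hZD : (γ2+γ3)*(A3'*Real.exp (-γ3*b') - P3*(b'-t3))
        = (γ1-γ2)*(A1'*Real.exp (γ1*b') - P1*(b'-t1)) := by
      linear_combination s4 b' - iv' + γ2*i' - γ2*(s1 b')
    have d3 : (γ2+γ3)*(A1'*Real.exp (γ1*b') - P1*(b'-t1))*η/(γ1-η)
        + ((γ2+γ3)*(A2'*Real.exp (γ2*b') - P2*(b'-t2)))*η/(γ2-η)
        - ((γ2+γ3)*(A3'*Real.exp (-γ3*b') - P3*(b'-t3)))*η/(γ3+η) = 0 := by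
      linear_combination (γ2+γ3)*ii' - (γ2+γ3)*(s2 b')
    rw [hYD, hZD] at d3
    obtain ⟨K, hKd⟩ : ∃ x : ℝ, x = η*(γ2+γ3)/(γ1-η) - η*(γ1+γ3)/(γ2-η) - η*(γ1-γ2)/(γ3+η) :=
      ⟨_, rfl⟩
    have hDXK : (A1'*Real.exp (γ1*b') - P1*(b'-t1)) * K = 0 := by
      rw [hKd]; linear_combination d3
    have hKval : K * ((γ1-η)*(γ2-η)*(γ3+η)) = η * ((γ2-γ1)*((γ1+γ3)*(γ2+γ3))) := by
      rw [hKd]; field_simp; ring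
    have hKne : K ≠ 0 := by
      intro h
      rw [h, zero_mul] at hKval
      have hpos2 : 0 < η * ((γ2-γ1)*((γ1+γ3)*(γ2+γ3))) :=
        mul_pos hη (mul_pos hg21 (mul_pos hg13 hg23))
      linarith
    have hDX : A1'*Real.exp (γ1*b') - P1*(b'-t1) = 0 :=
      (mul_eq_zero.mp hDXK).resolve_right hKne
    have hDY : A2'*Real.exp (γ2*b') - P2*(b'-t2) = 0 := by
      rw [hDX] at hYD
      simp only [mul_zero, neg_zero] at hYD
      exact (mul_eq_zero.mp hYD).resolve_left hg23ne
    have hDZ : A3'*Real.exp (-γ3*b') - P3*(b'-t3) = 0 := by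
      rw [hDX] at hZD
      simp only [mul_zero] at hZD
      exact (mul_eq_zero.mp hZD).resolve_left hg23ne
    -- Φ b' = 0
    have m1' : Real.exp (γ1*a) = Real.exp (γ1*b') * Real.exp (-γ1*(b'-a)) := by
      rw [← Real.exp_add]; congr 1; ring
    have m2' : Real.exp (γ2*a) = Real.exp (γ2*b') * Real.exp (-γ2*(b'-a)) := by
      rw [← Real.exp_add]; congr 1; ring
    have m3' : Real.exp (-γ3*a) = Real.exp (-γ3*b') * Real.exp (γ3*(b'-a)) := by
      rw [← Real.exp_add]; congr 1; ring
    rw [m1', m2', m3'] at iii'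
    have hΦb' : Φ b' = 0 := by
      rw [hΦval b']
      linear_combination iii' - γ1*Real.exp (-γ1*(b'-a))*hDX
        - γ2*Real.exp (-γ2*(b'-a))*hDY + γ3*Real.exp (γ3*(b'-a))*hDZ
    have hb'b₀ : b' = b₀ := huniq b' hb'a hΦb'
    subst hb'b₀
    refine ⟨?_, ?_, ?_, rfl⟩
    · rw [← sub_eq_zero.mp hDX, mul_assoc, ← Real.exp_add, add_neg_cancel, Real.exp_zero,
        mul_one]
    · rw [← sub_eq_zero.mp hDY, mul_assoc, ← Real.exp_add, add_neg_cancel, Real.exp_zero,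
        mul_one]
    · rw [← sub_eq_zero.mp hDZ, mul_assoc, ← Real.exp_add,
        show -γ3*b' + γ3*b' = 0 by ring, Real.exp_zero, mul_one]
  · rw [← hMd]; exact hMb₀
  · positivity
  · positivity
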